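/- arXiv:1605.06841 — 6 statements merged into one kernel-verified Lean document; each statement's English description precedes it below -/
import Mathlib

section
/- Let δ ∈ (0,1), γ₀ ≥ 1, k ∈ ℤ \ {0}, and consider the Volterra equation ρ̂(t,k) = H(t,k) + δ ∫₀ᵗ |k|^{1−γ₀}(t−τ) e^{−|k|(t−τ)} ρ̂(τ,k) dτ (gravitational case, W ̂(k) = −|k|^{−1−γ₀}, f̂⁰(ξ) = 2π e^{−|ξ|} times δ). Then the unique solution is ρ̂(t,k) = H(t,k) + ∫₀ᵗ √δ |k|^{(1−γ₀)/2} sinh(√δ |k|^{(1−γ₀)/2}(t−s)) e^{−|k|(t−s)} H(s,k) ds. -/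
open MeasureTheory Real intervalIntegral

noncomputable section VolterraAux

/-- Uniqueness for a 2×2 linear ODE system with zero initial data. -/
lemma linsys_zero (α β γ' η : ℂ) (p q : ℝ → ℂ) (T : ℝ)
    (hp : ContinuousOn p (Set.Icc 0 T)) (hq : ContinuousOn q (Set.Icc 0 T))
    (hp' : ∀ t ∈ Set.Ico (0:ℝ) T, HasDerivWithinAt p (α * p t + β * q t) (Set.Ici t) t)
    (hq' : ∀ t ∈ Set.Ico (0:ℝ) T, HasDerivWithinAt q (γ' * p t + η * q t) (Set.Ici t) t)
    (hp0 : p 0 = 0) (hq0 : q 0 = 0) :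
    ∀ t ∈ Set.Icc (0:ℝ) T, p t = 0 ∧ q t = 0 := by
  set L : (ℂ × ℂ) →L[ℂ] (ℂ × ℂ) :=
    ((α • ContinuousLinearMap.fst ℂ ℂ ℂ) + (β • ContinuousLinearMap.snd ℂ ℂ ℂ)).prod
      ((γ' • ContinuousLinearMap.fst ℂ ℂ ℂ) + (η • ContinuousLinearMap.snd ℂ ℂ ℂ)) with hL
  have hLapp : ∀ x : ℂ × ℂ, L x = (α * x.1 + β * x.2, γ' * x.1 + η * x.2) := by
    intro x
    simp [hL, ContinuousLinearMap.prod_apply, smul_eq_mul]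
  have huniq := ODE_solution_unique (v := fun _ x => L x) (K := ‖L‖₊)
    (f := fun t => (p t, q t)) (g := fun _ => (0, 0)) (a := 0) (b := T)
    (fun _ => L.lipschitz)
    (hp.prodMk hq)
    (fun t ht => by
      simp only [hLapp]
      exact (hp' t ht).prodMk (hq' t ht))
    continuousOn_const
    (fun t ht => by
      simp only [hLapp]
      exact (hasDerivWithinAt_const t _ ((0:ℂ),(0:ℂ))).congr_deriv (by ext <;> simp))
    (by simp [hp0, hq0])
  intro t ht
  have := huniq ht
  simp only [Prod.mk.injEq] at this
  exact ⟨this.1, this.2⟩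

/-- FTC for continuous complex-valued integrands. -/
lemma ftcC (g : ℝ → ℂ) (hg : Continuous g) (t : ℝ) :
    HasDerivAt (fun u => ∫ s in (0:ℝ)..u, g s) (g t) t :=
  intervalIntegral.integral_hasDerivAt_right (hg.intervalIntegrable _ _)
    (hg.stronglyMeasurableAtFilter _ _) hg.continuousAt

def VA (a b : ℝ) (H : ℝ → ℂ) (t : ℝ) : ℂ :=
  ∫ s in (0:ℝ)..t, ((Real.cosh (a*s) * Real.exp (b*s) : ℝ) : ℂ) * H s

def VB (a b : ℝ) (H : ℝ → ℂ) (t : ℝ) : ℂ :=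
  ∫ s in (0:ℝ)..t, ((Real.sinh (a*s) * Real.exp (b*s) : ℝ) : ℂ) * H s

def VP (b : ℝ) (f : ℝ → ℂ) (t : ℝ) : ℂ :=
  ∫ τ in (0:ℝ)..t, ((Real.exp (b*τ) : ℝ) : ℂ) * f τ

def VQ (b : ℝ) (f : ℝ → ℂ) (t : ℝ) : ℂ :=
  ∫ τ in (0:ℝ)..t, ((τ * Real.exp (b*τ) : ℝ) : ℂ) * f τ

def Vy (a b : ℝ) (H : ℝ → ℂ) (t : ℝ) : ℂ :=
  (a:ℂ) * ((Real.exp (-(b*t)) : ℝ) : ℂ) *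
    (((Real.sinh (a*t) : ℝ) : ℂ) * VA a b H t - ((Real.cosh (a*t) : ℝ) : ℂ) * VB a b H t)

def Vy₂ (a b : ℝ) (H : ℝ → ℂ) (t : ℝ) : ℂ :=
  (a:ℂ)^2 * ((Real.exp (-(b*t)) : ℝ) : ℂ) *
    (((Real.cosh (a*t) : ℝ) : ℂ) * VA a b H t - ((Real.sinh (a*t) : ℝ) : ℂ) * VB a b H t)

def Vz (a b : ℝ) (f : ℝ → ℂ) (t : ℝ) : ℂ :=
  (a:ℂ)^2 * ((Real.exp (-(b*t)) : ℝ) : ℂ) * ((t:ℂ) * VP b f t - VQ b f t)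

def Vz₂ (a b : ℝ) (f : ℝ → ℂ) (t : ℝ) : ℂ :=
  (a:ℂ)^2 * ((Real.exp (-(b*t)) : ℝ) : ℂ) * VP b f t

lemma hasDerivAt_expC (b t : ℝ) :
    HasDerivAt (fun u : ℝ => ((Real.exp (-(b*u)) : ℝ) : ℂ)) ((-b * Real.exp (-(b*t)) : ℝ) : ℂ) t := by
  have h0 : HasDerivAt (fun u : ℝ => -(b*u)) (-b) t := by
    exact ((hasDerivAt_id t).const_mul b).neg.congr_deriv (by ring)
  have h : HasDerivAt (fun u : ℝ => Real.exp (-(b*u))) (-b * Real.exp (-(b*t))) t := by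
    exact ((Real.hasDerivAt_exp (-(b*t))).comp t h0).congr_deriv
      (by ring : Real.exp (-(b*t)) * -b = -b * Real.exp (-(b*t)))
  exact h.ofReal_comp

lemma hasDerivAt_sinhC (a t : ℝ) :
    HasDerivAt (fun u : ℝ => ((Real.sinh (a*u) : ℝ) : ℂ)) ((a * Real.cosh (a*t) : ℝ) : ℂ) t := by
  have h0 : HasDerivAt (fun u : ℝ => a*u) a t := by
    simpa using (hasDerivAt_id t).const_mul a
  have h : HasDerivAt (fun u : ℝ => Real.sinh (a*u)) (a * Real.cosh (a*t)) t := by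
    exact ((Real.hasDerivAt_sinh (a*t)).comp t h0).congr_deriv (by ring)
  exact h.ofReal_comp

lemma hasDerivAt_coshC (a t : ℝ) :
    HasDerivAt (fun u : ℝ => ((Real.cosh (a*u) : ℝ) : ℂ)) ((a * Real.sinh (a*t) : ℝ) : ℂ) t := by
  have h0 : HasDerivAt (fun u : ℝ => a*u) a t := by
    simpa using (hasDerivAt_id t).const_mul a
  have h : HasDerivAt (fun u : ℝ => Real.cosh (a*u)) (a * Real.sinh (a*t)) t := by
    exact ((Real.hasDerivAt_cosh (a*t)).comp t h0).congr_deriv (by ring)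
  exact h.ofReal_comp

lemma hasDerivAt_ofReal (t : ℝ) : HasDerivAt (fun u : ℝ => ((u:ℝ):ℂ)) 1 t := by
  simpa using (hasDerivAt_id t).ofReal_comp

lemma VA_hasDeriv (a b : ℝ) (H : ℝ → ℂ) (hH : Continuous H) (t : ℝ) :
    HasDerivAt (VA a b H) (((Real.cosh (a*t) * Real.exp (b*t) : ℝ):ℂ) * H t) t :=
  ftcC _ (by fun_prop) t

lemma VB_hasDeriv (a b : ℝ) (H : ℝ → ℂ) (hH : Continuous H) (t : ℝ) :
    HasDerivAt (VB a b H) (((Real.sinh (a*t) * Real.exp (b*t) : ℝ):ℂ) * H t) t :=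
  ftcC _ (by fun_prop) t

lemma VP_hasDeriv (b : ℝ) (f : ℝ → ℂ) (hf : Continuous f) (t : ℝ) :
    HasDerivAt (VP b f) (((Real.exp (b*t) : ℝ):ℂ) * f t) t :=
  ftcC _ (by fun_prop) t

lemma VQ_hasDeriv (b : ℝ) (f : ℝ → ℂ) (hf : Continuous f) (t : ℝ) :
    HasDerivAt (VQ b f) (((t * Real.exp (b*t) : ℝ):ℂ) * f t) t :=
  ftcC _ (by fun_prop) t

lemma Vy_hasDeriv (a b : ℝ) (H : ℝ → ℂ) (hH : Continuous H) (t : ℝ) :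
    HasDerivAt (Vy a b H) (-(b:ℂ) * Vy a b H t + Vy₂ a b H t) t := by
  have h1 : HasDerivAt (fun u : ℝ => (a:ℂ) * ((Real.exp (-(b*u)) : ℝ):ℂ))
      ((a:ℂ) * ((-b * Real.exp (-(b*t)) : ℝ):ℂ)) t := (hasDerivAt_expC b t).const_mul _
  have h2 := (hasDerivAt_sinhC a t).mul (VA_hasDeriv a b H hH t)
  have h3 := (hasDerivAt_coshC a t).mul (VB_hasDeriv a b H hH t)
  have h5 := h1.mul (h2.sub h3)
  refine h5.congr_deriv (Eq.symm ?_)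
  simp only [Vy, Vy₂, Pi.mul_apply, Pi.sub_apply]
  push_cast
  ring

lemma Vy₂_hasDeriv (a b : ℝ) (H : ℝ → ℂ) (hH : Continuous H) (t : ℝ) :
    HasDerivAt (Vy₂ a b H) (-(b:ℂ) * Vy₂ a b H t + (a:ℂ)^2 * (H t + Vy a b H t)) t := by
  have h1 : HasDerivAt (fun u : ℝ => (a:ℂ)^2 * ((Real.exp (-(b*u)) : ℝ):ℂ))
      ((a:ℂ)^2 * ((-b * Real.exp (-(b*t)) : ℝ):ℂ)) t := (hasDerivAt_expC b t).const_mul _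
  have h2 := (hasDerivAt_coshC a t).mul (VA_hasDeriv a b H hH t)
  have h3 := (hasDerivAt_sinhC a t).mul (VB_hasDeriv a b H hH t)
  have h5 := h1.mul (h2.sub h3)
  refine h5.congr_deriv (Eq.symm ?_)
  simp only [Vy, Vy₂, Pi.mul_apply, Pi.sub_apply]
  have hexp : Complex.exp (-((b:ℂ)*t)) * Complex.exp ((b:ℂ)*t) = 1 := by
    rw [← Complex.exp_add]; simp
  have hch : Complex.cosh ((a:ℂ)*t)^2 - Complex.sinh ((a:ℂ)*t)^2 = 1 :=
    Complex.cosh_sq_sub_sinh_sq _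
  push_cast
  linear_combination (-(a:ℂ)^2 * H t) *
    ((Complex.cosh ((a:ℂ)*t)^2 - Complex.sinh ((a:ℂ)*t)^2) * hexp + hch)

lemma Vz_hasDeriv (a b : ℝ) (f : ℝ → ℂ) (hf : Continuous f) (t : ℝ) :
    HasDerivAt (Vz a b f) (-(b:ℂ) * Vz a b f t + Vz₂ a b f t) t := by
  have h1 : HasDerivAt (fun u : ℝ => (a:ℂ)^2 * ((Real.exp (-(b*u)) : ℝ):ℂ))
      ((a:ℂ)^2 * ((-b * Real.exp (-(b*t)) : ℝ):ℂ)) t := (hasDerivAt_expC b t).const_mul _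
  have h2 := (hasDerivAt_ofReal t).mul (VP_hasDeriv b f hf t)
  have h3 := VQ_hasDeriv b f hf t
  have h5 := h1.mul (h2.sub h3)
  refine h5.congr_deriv (Eq.symm ?_)
  simp only [Vz, Vz₂, Pi.mul_apply, Pi.sub_apply]
  push_cast
  ring

lemma Vz₂_hasDeriv (a b : ℝ) (f : ℝ → ℂ) (hf : Continuous f) (t : ℝ) :
    HasDerivAt (Vz₂ a b f) (-(b:ℂ) * Vz₂ a b f t + (a:ℂ)^2 * f t) t := by
  have h1 : HasDerivAt (fun u : ℝ => (a:ℂ)^2 * ((Real.exp (-(b*u)) : ℝ):ℂ))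
      ((a:ℂ)^2 * ((-b * Real.exp (-(b*t)) : ℝ):ℂ)) t := (hasDerivAt_expC b t).const_mul _
  have h5 := h1.mul (VP_hasDeriv b f hf t)
  refine h5.congr_deriv (Eq.symm ?_)
  simp only [Vz₂]
  have hexp : Complex.exp (-((b:ℂ)*t)) * Complex.exp ((b:ℂ)*t) = 1 := by
    rw [← Complex.exp_add]; simp
  push_cast
  linear_combination (-(a:ℂ)^2 * f t) * hexp

lemma Vy_cont (a b : ℝ) (H : ℝ → ℂ) (hH : Continuous H) : Continuous (Vy a b H) :=
  continuous_iff_continuousAt.2 fun t => (Vy_hasDeriv a b H hH t).continuousAt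

lemma Vy₂_cont (a b : ℝ) (H : ℝ → ℂ) (hH : Continuous H) : Continuous (Vy₂ a b H) :=
  continuous_iff_continuousAt.2 fun t => (Vy₂_hasDeriv a b H hH t).continuousAt

lemma Vz_cont (a b : ℝ) (f : ℝ → ℂ) (hf : Continuous f) : Continuous (Vz a b f) :=
  continuous_iff_continuousAt.2 fun t => (Vz_hasDeriv a b f hf t).continuousAt

lemma Vz₂_cont (a b : ℝ) (f : ℝ → ℂ) (hf : Continuous f) : Continuous (Vz₂ a b f) :=
  continuous_iff_continuousAt.2 fun t => (Vz₂_hasDeriv a b f hf t).continuousAt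

lemma Vy_zero (a b : ℝ) (H : ℝ → ℂ) : Vy a b H 0 = 0 := by
  simp [Vy, VA, VB, intervalIntegral.integral_same]

lemma Vy₂_zero (a b : ℝ) (H : ℝ → ℂ) : Vy₂ a b H 0 = 0 := by
  simp [Vy₂, VA, VB, intervalIntegral.integral_same]

lemma Vz_zero (a b : ℝ) (f : ℝ → ℂ) : Vz a b f 0 = 0 := by
  simp [Vz, VP, VQ, intervalIntegral.integral_same]

lemma Vz₂_zero (a b : ℝ) (f : ℝ → ℂ) : Vz₂ a b f 0 = 0 := by
  simp [Vz₂, VP, intervalIntegral.integral_same]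

/-- The resolvent solves the Volterra equation. -/
lemma key1 (a b : ℝ) (H : ℝ → ℂ) (hH : Continuous H) :
    ∀ t : ℝ, 0 ≤ t → Vy a b H t = Vz a b (fun u => H u + Vy a b H u) t := by
  intro T hT
  set ρ : ℝ → ℂ := fun u => H u + Vy a b H u with hρdef
  have hρc : Continuous ρ := hH.add (Vy_cont a b H hH)
  have h := linsys_zero (-(b:ℂ)) 1 0 (-(b:ℂ))
      (fun t => Vy a b H t - Vz a b ρ t) (fun t => Vy₂ a b H t - Vz₂ a b ρ t) T
      (((Vy_cont a b H hH).sub (Vz_cont a b ρ hρc)).continuousOn)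
      (((Vy₂_cont a b H hH).sub (Vz₂_cont a b ρ hρc)).continuousOn)
      (fun t _ => by
        have := ((Vy_hasDeriv a b H hH t).sub (Vz_hasDeriv a b ρ hρc t)).hasDerivWithinAt
          (s := Set.Ici t)
        refine this.congr_deriv (Eq.symm ?_)
        ring)
      (fun t _ => by
        have := ((Vy₂_hasDeriv a b H hH t).sub (Vz₂_hasDeriv a b ρ hρc t)).hasDerivWithinAt
          (s := Set.Ici t)
        refine this.congr_deriv (Eq.symm ?_)
        simp only [hρdef]
        ring)
      (by show Vy a b H 0 - Vz a b ρ 0 = 0; rw [Vy_zero, Vz_zero]; ring)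
      (by show Vy₂ a b H 0 - Vz₂ a b ρ 0 = 0; rw [Vy₂_zero, Vz₂_zero]; ring)
  have := (h T ⟨hT, le_refl T⟩).1
  exact sub_eq_zero.1 this

/-- Uniqueness: a continuous solution of the homogeneous equation vanishes. -/
lemma key2 (a b : ℝ) (g : ℝ → ℂ) (hg : Continuous g)
    (heq : ∀ t : ℝ, 0 ≤ t → g t = Vz a b g t) : ∀ t : ℝ, 0 ≤ t → g t = 0 := by
  intro T hT
  have h := linsys_zero (-(b:ℂ)) 1 ((a:ℂ)^2) (-(b:ℂ)) (Vz a b g) (Vz₂ a b g) T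
      ((Vz_cont a b g hg).continuousOn) ((Vz₂_cont a b g hg).continuousOn)
      (fun t _ => by
        have := (Vz_hasDeriv a b g hg t).hasDerivWithinAt (s := Set.Ici t)
        refine this.congr_deriv (Eq.symm ?_)
        ring)
      (fun t ht => by
        have := (Vz₂_hasDeriv a b g hg t).hasDerivWithinAt (s := Set.Ici t)
        refine this.congr_deriv (Eq.symm ?_)
        rw [heq t ht.1]
        ring)
      (Vz_zero a b g) (Vz₂_zero a b g)
  rw [heq T hT]
  exact (h T ⟨hT, le_refl T⟩).1

end VolterraAux

/-- Resolvent formula for the Volterra equation in the gravitational case: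
`ρ̂(t,k) = H(t,k) + δ ∫₀ᵗ |k|^{1-γ₀}(t-τ) e^{-|k|(t-τ)} ρ̂(τ,k) dτ`
has unique (continuous) solution
`ρ̂(t,k) = H(t,k) + ∫₀ᵗ √δ |k|^{(1-γ₀)/2} sinh(√δ |k|^{(1-γ₀)/2}(t-s)) e^{-|k|(t-s)} H(s,k) ds`. -/
theorem volterra_gravitational
    (δ γ₀ : ℝ) (hδ : 0 < δ) (hδ1 : δ < 1) (hγ : 1 ≤ γ₀)
    (k : ℤ) (hk : k ≠ 0) (H : ℝ → ℂ) (hH : Continuous H)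
    (ρ : ℝ → ℂ)
    (hρ : ∀ t : ℝ, ρ t = H t + ∫ s in (0:ℝ)..t,
        ((Real.sqrt δ * |(k : ℝ)| ^ ((1 - γ₀) / 2) *
          Real.sinh (Real.sqrt δ * |(k : ℝ)| ^ ((1 - γ₀) / 2) * (t - s)) *
          Real.exp (-|(k : ℝ)| * (t - s)) : ℝ) : ℂ) * H s) :
    (∀ t : ℝ, 0 ≤ t →
      ρ t = H t + (δ : ℂ) * ∫ τ in (0:ℝ)..t,
        ((|(k : ℝ)| ^ (1 - γ₀) * (t - τ) * Real.exp (-|(k : ℝ)| * (t - τ)) : ℝ) : ℂ) * ρ τ)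
    ∧
    (∀ ρ' : ℝ → ℂ, Continuous ρ' →
      (∀ t : ℝ, 0 ≤ t →
        ρ' t = H t + (δ : ℂ) * ∫ τ in (0:ℝ)..t,
          ((|(k : ℝ)| ^ (1 - γ₀) * (t - τ) * Real.exp (-|(k : ℝ)| * (t - τ)) : ℝ) : ℂ) * ρ' τ) →
      ∀ t : ℝ, 0 ≤ t → ρ' t = ρ t) := by
  have hk' : ((k:ℝ)) ≠ 0 := Int.cast_ne_zero.2 hk
  set b : ℝ := |(k:ℝ)| with hbdef
  have hb : 0 < b := abs_pos.2 hk'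
  set c : ℝ := b ^ (1 - γ₀) with hcdef
  set a : ℝ := Real.sqrt δ * b ^ ((1 - γ₀) / 2) with hadef
  have hac : δ * c = a ^ 2 := by
    rw [hadef, hcdef, mul_pow, Real.sq_sqrt hδ.le]
    congr 1
    rw [← Real.rpow_natCast (b ^ ((1 - γ₀) / 2)) 2, ← Real.rpow_mul hb.le]
    norm_num
  -- the given formula for ρ in terms of Vy
  have hρy : ∀ t, ρ t = H t + Vy a b H t := by
    intro t
    rw [hρ t]
    congr 1
    have hint : ∀ s : ℝ,
        ((a * Real.sinh (a * (t - s)) * Real.exp (-b * (t - s)) : ℝ) : ℂ) * H s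
          = ((a * Real.exp (-(b*t)) * Real.sinh (a*t) : ℝ) : ℂ) *
              (((Real.cosh (a*s) * Real.exp (b*s) : ℝ) : ℂ) * H s)
            - ((a * Real.exp (-(b*t)) * Real.cosh (a*t) : ℝ) : ℂ) *
              (((Real.sinh (a*s) * Real.exp (b*s) : ℝ) : ℂ) * H s) := by
      intro s
      push_cast
      rw [show (a:ℂ) * ((t:ℂ) - s) = (a:ℂ)*t - (a:ℂ)*s by ring, Complex.sinh_sub,
        show -(b:ℂ) * ((t:ℂ) - s) = -((b:ℂ)*t) + (b:ℂ)*s by ring, Complex.exp_add]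
      ring
    rw [intervalIntegral.integral_congr (g := fun s =>
        ((a * Real.exp (-(b*t)) * Real.sinh (a*t) : ℝ) : ℂ) *
            (((Real.cosh (a*s) * Real.exp (b*s) : ℝ) : ℂ) * H s)
          - ((a * Real.exp (-(b*t)) * Real.cosh (a*t) : ℝ) : ℂ) *
            (((Real.sinh (a*s) * Real.exp (b*s) : ℝ) : ℂ) * H s)) (fun s _ => hint s)]
    rw [intervalIntegral.integral_sub
        (((by fun_prop : Continuous fun s : ℝ =>
          ((a * Real.exp (-(b*t)) * Real.sinh (a*t) : ℝ) : ℂ) *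
            (((Real.cosh (a*s) * Real.exp (b*s) : ℝ) : ℂ) * H s))).intervalIntegrable _ _)
        (((by fun_prop : Continuous fun s : ℝ =>
          ((a * Real.exp (-(b*t)) * Real.cosh (a*t) : ℝ) : ℂ) *
            (((Real.sinh (a*s) * Real.exp (b*s) : ℝ) : ℂ) * H s))).intervalIntegrable _ _),
      intervalIntegral.integral_const_mul, intervalIntegral.integral_const_mul]
    show _ = Vy a b H t
    simp only [Vy, VA, VB]
    push_cast
    ring
  have hρcont : Continuous ρ := by
    have : ρ = fun t => H t + Vy a b H t := funext hρy
    rw [this]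
    exact hH.add (Vy_cont a b H hH)
  -- expansion of the Volterra integral in terms of Vz
  have hexpand : ∀ (f : ℝ → ℂ), Continuous f → ∀ t : ℝ,
      (δ:ℂ) * ∫ τ in (0:ℝ)..t, ((c * (t - τ) * Real.exp (-b * (t - τ)) : ℝ) : ℂ) * f τ
        = Vz a b f t := by
    intro f hf t
    have hint : ∀ τ : ℝ,
        ((c * (t - τ) * Real.exp (-b * (t - τ)) : ℝ) : ℂ) * f τ
          = ((c * Real.exp (-(b*t)) * t : ℝ) : ℂ) * (((Real.exp (b*τ) : ℝ) : ℂ) * f τ)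
            - ((c * Real.exp (-(b*t)) : ℝ) : ℂ) * (((τ * Real.exp (b*τ) : ℝ) : ℂ) * f τ) := by
      intro τ
      push_cast
      rw [show -(b:ℂ) * ((t:ℂ) - τ) = -((b:ℂ)*t) + (b:ℂ)*τ by ring, Complex.exp_add]
      ring
    rw [intervalIntegral.integral_congr (g := fun τ =>
        ((c * Real.exp (-(b*t)) * t : ℝ) : ℂ) * (((Real.exp (b*τ) : ℝ) : ℂ) * f τ)
          - ((c * Real.exp (-(b*t)) : ℝ) : ℂ) * (((τ * Real.exp (b*τ) : ℝ) : ℂ) * f τ))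
        (fun τ _ => hint τ)]
    rw [intervalIntegral.integral_sub
        (((by fun_prop : Continuous fun τ : ℝ =>
          ((c * Real.exp (-(b*t)) * t : ℝ) : ℂ) *
            (((Real.exp (b*τ) : ℝ) : ℂ) * f τ))).intervalIntegrable _ _)
        (((by fun_prop : Continuous fun τ : ℝ =>
          ((c * Real.exp (-(b*t)) : ℝ) : ℂ) *
            (((τ * Real.exp (b*τ) : ℝ) : ℂ) * f τ))).intervalIntegrable _ _),
      intervalIntegral.integral_const_mul, intervalIntegral.integral_const_mul]
    have hδc : (δ:ℂ) * (c:ℂ) = (a:ℂ)^2 := by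
      have := congrArg Complex.ofReal hac
      push_cast at this
      exact this
    show _ = Vz a b f t
    simp only [Vz, VP, VQ]
    push_cast
    linear_combination (Complex.exp (-((b:ℂ)*t)) *
      ((t:ℂ) * (∫ τ in (0:ℝ)..t, Complex.exp ((b:ℂ)*τ) * f τ)
        - ∫ τ in (0:ℝ)..t, (τ:ℂ) * Complex.exp ((b:ℂ)*τ) * f τ)) * hδc
  have hpart1 : ∀ t : ℝ, 0 ≤ t →
      ρ t = H t + (δ : ℂ) * ∫ τ in (0:ℝ)..t,
        ((c * (t - τ) * Real.exp (-b * (t - τ)) : ℝ) : ℂ) * ρ τ := by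
    intro t ht
    calc ρ t = H t + Vy a b H t := hρy t
      _ = H t + Vz a b (fun u => H u + Vy a b H u) t := by rw [key1 a b H hH t ht]
      _ = H t + Vz a b ρ t := by rw [show (fun u => H u + Vy a b H u) = ρ from (funext hρy).symm]
      _ = H t + (δ : ℂ) * ∫ τ in (0:ℝ)..t,
            ((c * (t - τ) * Real.exp (-b * (t - τ)) : ℝ) : ℂ) * ρ τ := by
          rw [hexpand ρ hρcont t]
  refine ⟨hpart1, ?_⟩
  intro ρ' hρ'c hρ'eq t ht
  set g : ℝ → ℂ := fun u => ρ' u - ρ u with hgdef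
  have hgc : Continuous g := hρ'c.sub hρcont
  have heq : ∀ s : ℝ, 0 ≤ s → g s = Vz a b g s := by
    intro s hs
    have e1 := hρ'eq s hs
    have e2 := hpart1 s hs
    have h3 : g s = (δ:ℂ) * ((∫ τ in (0:ℝ)..s,
          ((c * (s - τ) * Real.exp (-b * (s - τ)) : ℝ) : ℂ) * ρ' τ)
        - ∫ τ in (0:ℝ)..s, ((c * (s - τ) * Real.exp (-b * (s - τ)) : ℝ) : ℂ) * ρ τ) := by
      simp only [hgdef]
      rw [e1, e2]
      ring
    rw [h3, ← intervalIntegral.integral_sub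
        (((by fun_prop : Continuous fun τ : ℝ =>
          ((c * (s - τ) * Real.exp (-b * (s - τ)) : ℝ) : ℂ) * ρ' τ)).intervalIntegrable _ _)
        (((by fun_prop : Continuous fun τ : ℝ =>
          ((c * (s - τ) * Real.exp (-b * (s - τ)) : ℝ) : ℂ) * ρ τ)).intervalIntegrable _ _)]
    rw [intervalIntegral.integral_congr (g := fun τ =>
        ((c * (s - τ) * Real.exp (-b * (s - τ)) : ℝ) : ℂ) * g τ)
        (fun τ _ => by simp only [hgdef]; ring)]
    exact hexpand g hgc s
  have h0 := key2 a b g hgc heq t ht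
  have : ρ' t - ρ t = 0 := h0
  linear_combination this
end

section
/- Fix K̃ > 0, η > 0 and let Ñ = ⌊(K̃ ε η)^{1/3}⌋ for ε > 0. Define Y₁(η) = ∏_{j=1}^{Ñ} (ε K̃ η / j³) = (K̃ ε η)^{Ñ} / (Ñ!)³. Then if ε η is sufficiently large relative to K̃, there holds Y₁(η) ≈ (K̃ ε η)^{−1/2} e^{3(K̃ ε)^{1/3} η^{1/3}}, with implicit constants independent of ε, η, K̃. Moreover Y_k(η) ≤ Y₁(η) for every 1 ≤ k ≤ Ñ, where Y_k(η) = ∏_{j=k+1}^{Ñ}(ε K̃ η / j³). -/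
open Real Finset


lemma stirling_basic {n : ℕ} (hn : 1 ≤ n) :
    Real.sqrt π ≤ Stirling.stirlingSeq n ∧ Stirling.stirlingSeq n ≤ Real.exp 1 := by
  obtain ⟨k, rfl⟩ := Nat.exists_eq_add_of_le hn
  constructor
  · apply le_of_tendsto Stirling.tendsto_stirlingSeq_sqrt_pi
    filter_upwards [Filter.eventually_ge_atTop (1 + k)] with m hm
    obtain ⟨l, rfl⟩ := Nat.exists_eq_add_of_le hm
    have := Stirling.stirlingSeq'_antitone (Nat.le_add_right k l)
    simpa [Nat.succ_eq_add_one, Function.comp, add_comm, add_assoc, add_left_comm] using this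
  · have h1 := Stirling.stirlingSeq'_antitone (Nat.zero_le k)
    simp only [Function.comp, Nat.succ_eq_add_one] at h1
    have : Stirling.stirlingSeq (0+1) ≤ Real.exp 1 := by
      rw [Stirling.stirlingSeq_one]
      apply div_le_self (Real.exp_pos 1).le
      rw [show (1:ℝ) = Real.sqrt 1 by simp]
      exact Real.sqrt_le_sqrt (by norm_num)
    calc Stirling.stirlingSeq (1 + k) = Stirling.stirlingSeq (k+1) := by rw [add_comm]
    _ ≤ _ := le_trans h1 this

lemma stirling_bounds {n : ℕ} (hn : 1 ≤ n) :
    Real.sqrt (2*n) * ((n:ℝ)/Real.exp 1)^n ≤ (Nat.factorial n : ℝ) ∧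
    (Nat.factorial n : ℝ) ≤ Real.exp 1 * (Real.sqrt (2*n) * ((n:ℝ)/Real.exp 1)^n) := by
  have hD : 0 < Real.sqrt (2*n) * ((n:ℝ)/Real.exp 1)^n := by
    have : (0:ℝ) < n := by exact_mod_cast hn
    positivity
  have hfac : (Nat.factorial n : ℝ) = Stirling.stirlingSeq n * (Real.sqrt (2*n) * ((n:ℝ)/Real.exp 1)^n) := by
    rw [Stirling.stirlingSeq, div_mul_cancel₀]
    exact hD.ne'
  obtain ⟨hl, hu⟩ := stirling_basic hn
  have h1pi : (1:ℝ) ≤ Real.sqrt π := by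
    rw [show (1:ℝ) = Real.sqrt 1 by simp]
    exact Real.sqrt_le_sqrt (by linarith [Real.pi_gt_three])
  constructor
  · rw [hfac]; nlinarith
  · rw [hfac]; nlinarith

lemma prod_id_eq (x : ℝ) (N : ℕ) :
    ∏ j ∈ Finset.Icc 1 N, (x / (j:ℝ)^3) = x^N / ((Nat.factorial N : ℝ))^3 := by
  rw [Finset.prod_div_distrib, Finset.prod_const, Nat.card_Icc, Finset.prod_pow,
    show N + 1 - 1 = N by omega]
  congr 1
  rw [← Nat.cast_prod, ← Finset.Ico_add_one_right_eq_Icc, Finset.prod_Ico_id_eq_factorial]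

set_option maxHeartbeats 1000000 in
lemma core_est (x : ℝ) (hx : 8 ≤ x)
    (hSlow : Real.sqrt (2*(Nat.floor (x ^ ((1:ℝ)/3)) : ℝ)) * (((Nat.floor (x ^ ((1:ℝ)/3)) : ℝ))/Real.exp 1)^(Nat.floor (x ^ ((1:ℝ)/3))) ≤ (Nat.factorial (Nat.floor (x ^ ((1:ℝ)/3))) : ℝ))
    (hShigh : (Nat.factorial (Nat.floor (x ^ ((1:ℝ)/3))) : ℝ) ≤ Real.exp 1 * (Real.sqrt (2*(Nat.floor (x ^ ((1:ℝ)/3)) : ℝ)) * (((Nat.floor (x ^ ((1:ℝ)/3)) : ℝ))/Real.exp 1)^(Nat.floor (x ^ ((1:ℝ)/3))))) :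
    Real.exp (-6)/3 * (x ^ (-(1:ℝ)/2) * Real.exp (3 * x ^ ((1:ℝ)/3))) ≤
      x ^ (Nat.floor (x ^ ((1:ℝ)/3))) / ((Nat.factorial (Nat.floor (x ^ ((1:ℝ)/3))) : ℝ))^3 ∧
    x ^ (Nat.floor (x ^ ((1:ℝ)/3))) / ((Nat.factorial (Nat.floor (x ^ ((1:ℝ)/3))) : ℝ))^3 ≤
      (Real.exp 1)^3 * (x ^ (-(1:ℝ)/2) * Real.exp (3 * x ^ ((1:ℝ)/3))) := by
  have hx0 : (0:ℝ) < x := by linarith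
  set t := x ^ ((1:ℝ)/3) with htdef
  set N := Nat.floor t with hNdef
  have ht0 : 0 < t := Real.rpow_pos_of_pos hx0 _
  have ht2 : (2:ℝ) ≤ t := by
    have h1 : ((8:ℝ)) ^ ((1:ℝ)/3) ≤ t := Real.rpow_le_rpow (by norm_num) hx (by norm_num)
    have h8 : ((8:ℝ)) ^ ((1:ℝ)/3) = 2 := by
      rw [show (8:ℝ) = (2:ℝ)^(3:ℕ) by norm_num, ← Real.rpow_natCast 2 3,
        ← Real.rpow_mul (by norm_num)]
      norm_num
    linarith [h8 ▸ h1]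
  have hN2 : 2 ≤ N := Nat.le_floor (by exact_mod_cast ht2)
  have hNR : (2:ℝ) ≤ (N:ℝ) := by exact_mod_cast hN2
  have hN0 : (0:ℝ) < N := by linarith
  have hNt : (N:ℝ) ≤ t := Nat.floor_le ht0.le
  have htN : t < N + 1 := Nat.lt_floor_add_one t
  have ht3 : t ^ (3:ℕ) = x := by
    rw [htdef, ← Real.rpow_natCast (x ^ ((1:ℝ)/3)) 3, ← Real.rpow_mul hx0.le]
    norm_num
  have hN3x : (N:ℝ)^3 ≤ x := by rw [← ht3]; exact pow_le_pow_left₀ hN0.le hNt 3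
  have hxN3 : x ≤ ((N:ℝ)+1)^3 := by rw [← ht3]; exact pow_le_pow_left₀ ht0.le htN.le 3
  have ht2N : t ≤ 2*(N:ℝ) := by linarith
  set D := Real.sqrt (2*(N:ℝ)) * (((N:ℝ))/Real.exp 1)^N with hDdef
  have hD0 : 0 < D := by
    have : (0:ℝ) < 2*(N:ℝ) := by linarith
    positivity
  have hfac0 : (0:ℝ) < (Nat.factorial N : ℝ) := by exact_mod_cast (Nat.factorial_pos N)
  have hfac3low : D^3 ≤ ((Nat.factorial N : ℝ))^3 := pow_le_pow_left₀ hD0.le hSlow 3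
  have hfac3up : ((Nat.factorial N : ℝ))^3 ≤ (Real.exp 1)^3 * D^3 := by
    calc ((Nat.factorial N : ℝ))^3 ≤ (Real.exp 1 * D)^3 :=
      pow_le_pow_left₀ (Nat.cast_nonneg _) hShigh 3
    _ = _ := by ring
  have hexp3N : Real.exp (3*(N:ℝ)) = (Real.exp 1)^(3*N) := by
    rw [← Real.exp_nat_mul]
    push_cast
    ring_nf
  have hsqrt0 : 0 < Real.sqrt (2*(N:ℝ)) := Real.sqrt_pos.mpr (by linarith)
  have hkey : x^N / D^3 = (x/(N:ℝ)^3)^N * Real.exp (3*(N:ℝ)) / (Real.sqrt (2*(N:ℝ)))^3 := by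
    rw [hexp3N, hDdef, mul_pow, div_pow, div_pow, ← pow_mul, ← pow_mul (Real.exp 1)]
    rw [mul_comm N 3] at *
    field_simp
    ring_nf
    rw [inv_pow, mul_assoc, mul_inv_cancel₀ (pow_ne_zero _ hN0.ne'), mul_one]
  have hpiece1 : 1 ≤ (x/(N:ℝ)^3)^N := by
    have h1 : (1:ℝ) ≤ x/(N:ℝ)^3 := (one_le_div (by positivity)).mpr hN3x
    calc (1:ℝ) = 1^N := (one_pow N).symm
    _ ≤ _ := pow_le_pow_left₀ (by norm_num) h1 N
  have hpiece2 : (x/(N:ℝ)^3)^N ≤ (Real.exp 1)^3 := by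
    have h1 : x/(N:ℝ)^3 ≤ (((N:ℝ)+1)/(N:ℝ))^3 := by
      rw [div_pow]
      exact div_le_div_of_nonneg_right hxN3 (by positivity) |>.trans_eq rfl
    have h2 : ((N:ℝ)+1)/(N:ℝ) = 1 + 1/(N:ℝ) := by field_simp
    have h3 : (1 + 1/(N:ℝ))^N ≤ Real.exp 1 := by
      calc (1 + 1/(N:ℝ))^N ≤ (Real.exp (1/(N:ℝ)))^N :=
        pow_le_pow_left₀ (by positivity) (by linarith [Real.add_one_le_exp (1/(N:ℝ))]) N
      _ = Real.exp ((N:ℝ) * (1/(N:ℝ))) := (Real.exp_nat_mul _ N).symm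
      _ = Real.exp 1 := by rw [mul_one_div, div_self hN0.ne']
    calc (x/(N:ℝ)^3)^N ≤ ((((N:ℝ)+1)/(N:ℝ))^3)^N := pow_le_pow_left₀ (by positivity) h1 N
    _ = ((((N:ℝ)+1)/(N:ℝ))^N)^3 := by rw [← pow_mul, ← pow_mul, mul_comm]
    _ ≤ (Real.exp 1)^3 := by
        apply pow_le_pow_left₀ (by positivity)
        rw [h2]; exact h3
  have hexpup : Real.exp (3*(N:ℝ)) ≤ Real.exp (3*t) := by
    apply Real.exp_le_exp.mpr; linarith
  have hexplow : Real.exp (3*t) ≤ Real.exp (3*(N:ℝ)) * Real.exp 3 := by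
    rw [← Real.exp_add]; apply Real.exp_le_exp.mpr; linarith
  have hs_eq : (Real.sqrt t)^3 = x ^ ((1:ℝ)/2) := by
    rw [Real.sqrt_eq_rpow, ← Real.rpow_natCast (t ^ ((1:ℝ)/2)) 3, ← Real.rpow_mul ht0.le,
      htdef, ← Real.rpow_mul hx0.le]
    norm_num
  have hxinv : x ^ (-(1:ℝ)/2) = ((Real.sqrt t)^3)⁻¹ := by
    rw [hs_eq, ← Real.rpow_neg hx0.le]
    norm_num
  have hsq_low : (Real.sqrt t)^3 ≤ (Real.sqrt (2*(N:ℝ)))^3 :=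
    pow_le_pow_left₀ (Real.sqrt_nonneg _) (Real.sqrt_le_sqrt ht2N) 3
  have hsq_up : (Real.sqrt (2*(N:ℝ)))^3 ≤ 3 * (Real.sqrt t)^3 := by
    have h1 : Real.sqrt (2*(N:ℝ)) ≤ Real.sqrt 2 * Real.sqrt t := by
      rw [← Real.sqrt_mul (by norm_num)]
      exact Real.sqrt_le_sqrt (by linarith)
    have h2 : Real.sqrt 2 ^ 2 = 2 := Real.sq_sqrt (by norm_num)
    have h3 : Real.sqrt 2 ≤ 1.5 := by nlinarith [Real.sqrt_nonneg 2]
    calc (Real.sqrt (2*(N:ℝ)))^3 ≤ (Real.sqrt 2 * Real.sqrt t)^3 :=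
      pow_le_pow_left₀ (Real.sqrt_nonneg _) h1 3
    _ = (Real.sqrt 2)^3 * (Real.sqrt t)^3 := by ring
    _ ≤ 3 * (Real.sqrt t)^3 := by
        have h4 : (Real.sqrt 2)^3 ≤ 3 := by
          have h5 : (Real.sqrt 2)^3 = 2 * Real.sqrt 2 := by
            rw [pow_succ, h2]
          rw [h5]; linarith
        exact mul_le_mul_of_nonneg_right h4 (pow_nonneg (Real.sqrt_nonneg t) 3)
  have hst0 : 0 < (Real.sqrt t)^3 := by positivity
  constructor
  · -- lower bound
    have heq1 : Real.exp (-6)/3 * (x ^ (-(1:ℝ)/2) * Real.exp (3*t)) =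
        (1 * (Real.exp (3*t) / Real.exp 3)) / ((Real.exp 1)^3 * (3 * (Real.sqrt t)^3)) := by
      rw [hxinv, show (-6:ℝ) = -(3+3) by norm_num, Real.exp_neg, Real.exp_add,
        show (Real.exp 1)^3 = Real.exp 3 by rw [← Real.exp_nat_mul]; norm_num]
      field_simp
    have hkey2 : x^N / ((Real.exp 1)^3 * D^3) =
        (x/(N:ℝ)^3)^N * Real.exp (3*(N:ℝ)) / ((Real.exp 1)^3 * (Real.sqrt (2*(N:ℝ)))^3) := by
      rw [show (Real.exp 1)^3 * D^3 = D^3 * (Real.exp 1)^3 by ring, ← div_div, hkey, div_div,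
        mul_comm ((Real.sqrt (2*(N:ℝ)))^3) _]
    rw [heq1]
    calc (1 * (Real.exp (3*t) / Real.exp 3)) / ((Real.exp 1)^3 * (3 * (Real.sqrt t)^3))
        ≤ ((x/(N:ℝ)^3)^N * Real.exp (3*(N:ℝ))) / ((Real.exp 1)^3 * (Real.sqrt (2*(N:ℝ)))^3) := by
          apply div_le_div₀ (by positivity) ?_ (by positivity) ?_
          · apply mul_le_mul hpiece1 ?_ (by positivity) (by positivity)
            rw [div_le_iff₀ (Real.exp_pos 3)]
            exact hexplow
          · have : (Real.exp 1)^3 * (Real.sqrt (2*(N:ℝ)))^3 ≤ (Real.exp 1)^3 * (3*(Real.sqrt t)^3) :=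
              mul_le_mul_of_nonneg_left hsq_up (by positivity)
            linarith [this]
    _ = x^N / ((Real.exp 1)^3 * D^3) := hkey2.symm
    _ ≤ x^N / ((Nat.factorial N : ℝ))^3 := by
        apply div_le_div_of_nonneg_left (by positivity) (by positivity) hfac3up
  · -- upper bound
    calc x^N / ((Nat.factorial N : ℝ))^3 ≤ x^N / D^3 := by
          apply div_le_div_of_nonneg_left (by positivity) (by positivity) hfac3low
    _ = (x/(N:ℝ)^3)^N * Real.exp (3*(N:ℝ)) / (Real.sqrt (2*(N:ℝ)))^3 := hkey
    _ ≤ ((Real.exp 1)^3 * Real.exp (3*t)) / (Real.sqrt t)^3 := by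
          apply div_le_div₀ (by positivity) ?_ hst0 hsq_low
          exact mul_le_mul hpiece2 hexpup (Real.exp_pos _).le (by positivity)
    _ = (Real.exp 1)^3 * (x ^ (-(1:ℝ)/2) * Real.exp (3*t)) := by rw [hxinv]; ring

set_option maxHeartbeats 1000000 in
/-- Echo-cascade growth factor: with `Ñ = ⌊(K̃εη)^{1/3}⌋` and
`Y₁ = ∏_{j=1}^{Ñ} (εK̃η/j³)`, for `εη` sufficiently large relative to `K̃`,
`Y₁ ≈ (K̃εη)^{-1/2} e^{3(K̃ε)^{1/3} η^{1/3}}` with universal constants,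
and `Y_k = ∏_{j=k+1}^{Ñ} (εK̃η/j³) ≤ Y₁` for all `1 ≤ k ≤ Ñ`. -/
theorem echo_growth_factor :
    ∃ c C : ℝ, 0 < c ∧ 0 < C ∧
      ∀ Ktil : ℝ, 0 < Ktil → ∃ M : ℝ, ∀ ε η : ℝ, 0 < ε → 0 < η → M ≤ ε * η →
        (c * ((Ktil * ε * η) ^ (-(1:ℝ)/2) *
              Real.exp (3 * (Ktil * ε) ^ ((1:ℝ)/3) * η ^ ((1:ℝ)/3)))
            ≤ ∏ j ∈ Finset.Icc 1 (Nat.floor ((Ktil * ε * η) ^ ((1:ℝ)/3))),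
                (ε * Ktil * η / (j : ℝ) ^ 3))
        ∧ ((∏ j ∈ Finset.Icc 1 (Nat.floor ((Ktil * ε * η) ^ ((1:ℝ)/3))),
                (ε * Ktil * η / (j : ℝ) ^ 3))
            ≤ C * ((Ktil * ε * η) ^ (-(1:ℝ)/2) *
                Real.exp (3 * (Ktil * ε) ^ ((1:ℝ)/3) * η ^ ((1:ℝ)/3))))
        ∧ (∀ k : ℕ, 1 ≤ k → k ≤ Nat.floor ((Ktil * ε * η) ^ ((1:ℝ)/3)) →
            (∏ j ∈ Finset.Icc (k+1) (Nat.floor ((Ktil * ε * η) ^ ((1:ℝ)/3))),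
                (ε * Ktil * η / (j : ℝ) ^ 3))
              ≤ ∏ j ∈ Finset.Icc 1 (Nat.floor ((Ktil * ε * η) ^ ((1:ℝ)/3))),
                  (ε * Ktil * η / (j : ℝ) ^ 3)) := by
  refine ⟨Real.exp (-6)/3, (Real.exp 1)^3, by positivity, by positivity, ?_⟩
  intro Ktil hK
  refine ⟨8/Ktil, ?_⟩
  intro ε η hε hη hM
  have hx : (8:ℝ) ≤ Ktil * ε * η := by
    have h1 := (div_le_iff₀ hK).mp hM
    nlinarith
  have hx0 : (0:ℝ) < Ktil * ε * η := by linarith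
  have hmul : ε * Ktil * η = Ktil * ε * η := by ring
  have hexp_eq : 3 * (Ktil * ε) ^ ((1:ℝ)/3) * η ^ ((1:ℝ)/3)
      = 3 * (Ktil * ε * η) ^ ((1:ℝ)/3) := by
    rw [mul_assoc, ← Real.mul_rpow (by positivity) hη.le]
  have hN1 : 1 ≤ Nat.floor ((Ktil * ε * η) ^ ((1:ℝ)/3)) := by
    apply Nat.le_floor
    rw [Nat.cast_one]
    exact Real.one_le_rpow (by linarith) (by norm_num)
  have hprod : ∏ j ∈ Finset.Icc 1 (Nat.floor ((Ktil * ε * η) ^ ((1:ℝ)/3))),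
      (ε * Ktil * η / (j : ℝ) ^ 3)
      = (Ktil * ε * η) ^ (Nat.floor ((Ktil * ε * η) ^ ((1:ℝ)/3)))
        / ((Nat.factorial (Nat.floor ((Ktil * ε * η) ^ ((1:ℝ)/3))) : ℝ))^3 := by
    rw [hmul, prod_id_eq]
  obtain ⟨hSlow, hShigh⟩ := stirling_bounds (n := Nat.floor ((Ktil * ε * η) ^ ((1:ℝ)/3))) hN1
  obtain ⟨hlow, hup⟩ := core_est (Ktil * ε * η) hx hSlow hShigh
  have hN3x : ((Nat.floor ((Ktil * ε * η) ^ ((1:ℝ)/3)) : ℝ))^3 ≤ Ktil * ε * η := by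
    have h1 : ((Nat.floor ((Ktil * ε * η) ^ ((1:ℝ)/3)) : ℝ)) ≤ (Ktil * ε * η) ^ ((1:ℝ)/3) :=
      Nat.floor_le (by positivity)
    have h2 : ((Ktil * ε * η) ^ ((1:ℝ)/3)) ^ (3:ℕ) = Ktil * ε * η := by
      rw [← Real.rpow_natCast ((Ktil * ε * η) ^ ((1:ℝ)/3)) 3, ← Real.rpow_mul hx0.le]
      norm_num
    calc ((Nat.floor ((Ktil * ε * η) ^ ((1:ℝ)/3)) : ℝ))^3
        ≤ ((Ktil * ε * η) ^ ((1:ℝ)/3)) ^ (3:ℕ) := pow_le_pow_left₀ (by positivity) h1 3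
    _ = _ := h2
  refine ⟨?_, ?_, ?_⟩
  · rw [hexp_eq, hprod]; exact hlow
  · rw [hexp_eq, hprod]; exact hup
  · intro k hk1 hk2
    have hone : ∀ j ∈ Finset.Icc 1 (Nat.floor ((Ktil * ε * η) ^ ((1:ℝ)/3))),
        (1:ℝ) ≤ ε * Ktil * η / (j:ℝ)^3 := by
      intro j hj
      simp only [Finset.mem_Icc] at hj
      have hj1 : (1:ℝ) ≤ (j:ℝ) := by exact_mod_cast hj.1
      have hjN : ((j:ℝ))^3 ≤ Ktil * ε * η := by
        refine le_trans ?_ hN3x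
        apply pow_le_pow_left₀ (by positivity)
        exact_mod_cast hj.2
      rw [hmul]
      exact (one_le_div (by positivity)).mpr hjN
    have hunion : Finset.Icc 1 (Nat.floor ((Ktil * ε * η) ^ ((1:ℝ)/3)))
        = Finset.Icc 1 k ∪ Finset.Icc (k+1) (Nat.floor ((Ktil * ε * η) ^ ((1:ℝ)/3))) := by
      ext a
      simp only [Finset.mem_union, Finset.mem_Icc]
      omega
    rw [hunion, Finset.prod_union (by
      rw [Finset.disjoint_left]
      intro a ha hb
      simp only [Finset.mem_Icc] at ha hb
      omega)]
    apply le_mul_of_one_le_left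
    · apply Finset.prod_nonneg
      intro j hj
      have := hone j (by
        rw [hunion]
        exact Finset.mem_union_right _ hj)
      linarith
    · calc (1:ℝ) = ∏ _j ∈ Finset.Icc 1 k, (1:ℝ) := by rw [Finset.prod_const_one]
      _ ≤ _ := by
          apply Finset.prod_le_prod (by intro i _; norm_num)
          intro i hi
          apply hone
          simp only [Finset.mem_Icc] at hi ⊢
          omega
end

section
/- Let x = K̃ε η > 1 and N = ⌊x^{1/3}⌋. Then x^N / (N!)³ ≤ C x^{−1/2} e^{3 x^{1/3}} and x^N / (N!)³ ≥ c x^{−1/2} e^{3 x^{1/3}} for universal constants C, c > 0, provided x is sufficiently large. -/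
open Real

lemma factorial_stirling_bounds :
    ∃ a b : ℝ, 0 < a ∧ 0 < b ∧ ∀ n : ℕ, 1 ≤ n →
      a * (Real.sqrt (2 * n) * ((n : ℝ) / Real.exp 1) ^ n) ≤ (Nat.factorial n : ℝ) ∧
      (Nat.factorial n : ℝ) ≤ b * (Real.sqrt (2 * n) * ((n : ℝ) / Real.exp 1) ^ n) := by
  obtain ⟨a, ha0, ha⟩ := Stirling.stirlingSeq'_bounded_by_pos_constant
  refine ⟨a, Stirling.stirlingSeq 1, ha0, Stirling.stirlingSeq'_pos 0, ?_⟩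
  intro n hn
  obtain ⟨m, rfl⟩ : ∃ m, n = m + 1 := ⟨n - 1, (Nat.succ_pred_eq_of_pos hn).symm⟩
  have hD : 0 < Real.sqrt (2 * (m + 1 : ℕ)) * (((m + 1 : ℕ) : ℝ) / Real.exp 1) ^ (m + 1) := by
    have : (0:ℝ) < ((m + 1 : ℕ) : ℝ) := by positivity
    positivity
  have hs : Stirling.stirlingSeq (m + 1) =
      (Nat.factorial (m + 1) : ℝ) /
        (Real.sqrt (2 * (m + 1 : ℕ)) * (((m + 1 : ℕ) : ℝ) / Real.exp 1) ^ (m + 1)) := by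
    rfl
  constructor
  · have := ha m
    rw [hs, le_div_iff₀ hD] at this
    exact this
  · have h2 : Stirling.stirlingSeq (m + 1) ≤ Stirling.stirlingSeq 1 :=
      Stirling.stirlingSeq'_antitone (Nat.zero_le m)
    rw [hs, div_le_iff₀ hD] at h2
    exact h2

/-- Stirling-type two-sided estimate: for `x > 1` sufficiently large and `N = ⌊x^{1/3}⌋`,
`c x^{-1/2} e^{3x^{1/3}} ≤ x^N/(N!)³ ≤ C x^{-1/2} e^{3x^{1/3}}` for universal `c, C > 0`. -/
theorem stirling_echo_bound :
    ∃ C c : ℝ, 0 < C ∧ 0 < c ∧ ∃ M : ℝ, ∀ x : ℝ, 1 < x → M ≤ x →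
      (c * (x ^ (-(1:ℝ)/2) * Real.exp (3 * x ^ ((1:ℝ)/3)))
          ≤ x ^ (Nat.floor (x ^ ((1:ℝ)/3))) /
              ((Nat.factorial (Nat.floor (x ^ ((1:ℝ)/3))) : ℝ)) ^ 3)
      ∧ (x ^ (Nat.floor (x ^ ((1:ℝ)/3))) /
            ((Nat.factorial (Nat.floor (x ^ ((1:ℝ)/3))) : ℝ)) ^ 3
          ≤ C * (x ^ (-(1:ℝ)/2) * Real.exp (3 * x ^ ((1:ℝ)/3)))) := by
  obtain ⟨a, b, ha0, hb0, hab⟩ := factorial_stirling_bounds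
  refine ⟨Real.exp (9/2 - 3 * Real.log a - 3/2 * Real.log 2),
          Real.exp (-3 - 3 * Real.log b - 3/2 * Real.log 2),
          Real.exp_pos _, Real.exp_pos _, 1, ?_⟩
  intro x hx1 _
  set t : ℝ := x ^ ((1:ℝ)/3) with ht_def
  have hx0 : (0:ℝ) < x := lt_trans one_pos hx1
  have ht1 : 1 < t := by
    rw [ht_def]
    rw [show (1:ℝ) = x ^ (0:ℝ) by simp]
    exact Real.rpow_lt_rpow_left_iff hx1 |>.mpr (by norm_num)
  have ht0 : 0 < t := lt_trans one_pos ht1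
  set n : ℕ := Nat.floor t with hn_def
  have hn1 : 1 ≤ n := Nat.le_floor (by exact_mod_cast ht1.le)
  have hn0R : (0:ℝ) < (n : ℝ) := by exact_mod_cast hn1
  have hn1R : (1:ℝ) ≤ (n : ℝ) := by exact_mod_cast hn1
  have hnt : (n : ℝ) ≤ t := Nat.floor_le ht0.le
  have htn : t < (n : ℝ) + 1 := Nat.lt_floor_add_one t
  have hx3 : t ^ (3:ℕ) = x := by
    rw [ht_def, ← Real.rpow_natCast (x ^ ((1:ℝ)/3)) 3, ← Real.rpow_mul hx0.le]
    norm_num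
  have hlogx : Real.log x = 3 * Real.log t := by
    rw [← hx3, Real.log_pow]; push_cast; ring
  obtain ⟨hFl, hFu⟩ := hab n hn1
  set F : ℝ := (Nat.factorial n : ℝ) with hF_def
  have hF0 : 0 < F := by rw [hF_def]; exact_mod_cast Nat.factorial_pos n
  have hD0 : 0 < Real.sqrt (2 * n) * ((n : ℝ) / Real.exp 1) ^ n := by positivity
  have hlogD : Real.log (Real.sqrt (2 * n) * ((n : ℝ) / Real.exp 1) ^ n)
      = (Real.log 2 + Real.log n) / 2 + n * (Real.log n - 1) := by
    rw [Real.log_mul (by positivity) (by positivity), Real.log_sqrt (by positivity),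
      Real.log_pow, Real.log_div (by positivity) (Real.exp_ne_zero 1),
      Real.log_mul (by norm_num) (by positivity), Real.log_exp]
  -- log-factorial bounds
  have hlogFl : Real.log a + ((Real.log 2 + Real.log n) / 2 + n * (Real.log n - 1))
      ≤ Real.log F := by
    have := Real.log_le_log (by positivity) hFl
    rwa [Real.log_mul ha0.ne' hD0.ne', hlogD] at this
  have hlogFu : Real.log F
      ≤ Real.log b + ((Real.log 2 + Real.log n) / 2 + n * (Real.log n - 1)) := by
    have := Real.log_le_log hF0 hFu
    rwa [Real.log_mul hb0.ne' hD0.ne', hlogD] at this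
  -- log t vs log n
  have hlog_nt : Real.log n ≤ Real.log t := Real.log_le_log hn0R hnt
  have hlog_tn : Real.log t ≤ Real.log n + 1 / n := by
    have h1 : t ≤ (n : ℝ) * Real.exp (1 / n) := by
      have h2 : (1:ℝ) + 1/n ≤ Real.exp (1/n) := by
        have := Real.add_one_le_exp (1/(n:ℝ)); linarith
      have h3 : (n : ℝ) * (1 + 1/n) = n + 1 := by field_simp
      nlinarith [htn.le]
    calc Real.log t ≤ Real.log ((n : ℝ) * Real.exp (1/n)) := Real.log_le_log ht0 h1
      _ = Real.log n + 1/n := by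
          rw [Real.log_mul hn0R.ne' (Real.exp_ne_zero _), Real.log_exp]
  have hlog_tn1 : Real.log t ≤ Real.log n + 1 := by
    have : (1:ℝ)/n ≤ 1 := by
      rw [div_le_one hn0R]; exact hn1R
    linarith
  have hmul_nt : (n : ℝ) * Real.log n ≤ (n : ℝ) * Real.log t :=
    mul_le_mul_of_nonneg_left hlog_nt hn0R.le
  have hmul_tn : (n : ℝ) * Real.log t ≤ (n : ℝ) * Real.log n + 1 := by
    have := mul_le_mul_of_nonneg_left hlog_tn hn0R.le
    have h4 : (n:ℝ) * (Real.log n + 1/n) = n * Real.log n + 1 := by field_simp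
    linarith
  -- positivity of both sides and log expansions
  have hQ0 : 0 < x ^ n / F ^ 3 := by positivity
  have hR0 : 0 < x ^ (-(1:ℝ)/2) * Real.exp (3 * t) := by positivity
  have hlogQ : Real.log (x ^ n / F ^ 3) = n * Real.log x - 3 * Real.log F := by
    rw [Real.log_div (by positivity) (by positivity), Real.log_pow, Real.log_pow]
    push_cast; ring
  have hlogR : Real.log (x ^ (-(1:ℝ)/2) * Real.exp (3 * t))
      = (-(1:ℝ)/2) * Real.log x + 3 * t := by
    rw [Real.log_mul (by positivity) (Real.exp_ne_zero _), Real.log_rpow hx0, Real.log_exp]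
  constructor
  · -- lower bound
    rw [← Real.log_le_log_iff (by positivity) hQ0,
      Real.log_mul (Real.exp_ne_zero _) hR0.ne', Real.log_exp, hlogQ, hlogR, hlogx]
    linarith [hlogFu, hmul_nt, hlog_nt, htn.le]
  · -- upper bound
    rw [← Real.log_le_log_iff hQ0 (by positivity),
      Real.log_mul (Real.exp_ne_zero _) hR0.ne', Real.log_exp, hlogQ, hlogR, hlogx]
    linarith [hlogFl, hmul_tn, hlog_tn1, hnt]
end

section
/- Let b ∈ (0,1), t_{in} > 0, μ_∞ > 0 and μ(t) = μ_∞(1 + (t_{in}/t)^b) for t ≥ t_{in}. Suppose 1 ≤ k, τ ≤ t, and τ ≥ c₀ k t/(k+1) for some c₀ ∈ (1/2, 1] (i.e. τ is comparable to kt/(k+1)). Then μ(t) − μ(τ) ≤ −c · t_{in}^b · t^{−b}/(k+1) for a constant c > 0 depending only on μ_∞, b, c₀. -/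
open Real

lemma aux_chord {b s : ℝ} (hb0 : 0 ≤ b) (hb1 : b ≤ 1) (hs0 : 0 ≤ s) (hs1 : s ≤ 1) :
    1 + ((2:ℝ) ^ b - 1) * s ≤ (1 + s) ^ b := by
  have h := (Real.concaveOn_rpow hb0 hb1).2 (Set.mem_Ici.2 (zero_le_one))
    (Set.mem_Ici.2 (by norm_num : (0:ℝ) ≤ 2)) (by linarith : (0:ℝ) ≤ 1 - s) hs0 (by ring)
  simp only [smul_eq_mul, Real.one_rpow] at h
  have he : (1 - s) * 1 + s * 2 = 1 + s := by ring
  rw [he] at h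
  nlinarith [h]

/-- Drop of the time-dependent Gevrey index `μ(t) = μ_∞(1 + (t_in/t)^b)` between a
resonant time `τ ≈ kt/(k+1)` and `t`:
`μ(t) - μ(τ) ≤ -c t_in^b t^{-b}/(k+1)` with `c = c(μ_∞, b, c₀) > 0`. -/
theorem gevrey_index_drop (b tin μinf c₀ : ℝ)
    (hb0 : 0 < b) (hb1 : b < 1) (htin : 0 < tin) (hμ : 0 < μinf)
    (hc₀l : 1 / 2 < c₀) (hc₀u : c₀ ≤ 1) :
    ∃ c : ℝ, 0 < c ∧ ∀ (k : ℕ) (τ t : ℝ), 1 ≤ k → 1 ≤ τ → τ ≤ t → tin ≤ τ →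
      c₀ * ((k : ℝ) * t / ((k : ℝ) + 1)) ≤ τ → τ ≤ (k : ℝ) * t / ((k : ℝ) + 1) →
      μinf * (1 + (tin / t) ^ b) - μinf * (1 + (tin / τ) ^ b)
        ≤ -(c * tin ^ b * t ^ (-b) / ((k : ℝ) + 1)) := by
  have h2b : (1:ℝ) < 2 ^ b := Real.one_lt_rpow_iff_of_pos (by norm_num) |>.2 (Or.inl ⟨by norm_num, hb0⟩)
  refine ⟨μinf * (2 ^ b - 1), by nlinarith, ?_⟩
  intro k τ t hk hτ1 hτt htinτ hlo hhi
  have hkR : (1:ℝ) ≤ (k:ℝ) := by exact_mod_cast hk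
  have hk0 : (0:ℝ) < k := by linarith
  have hk10 : (0:ℝ) < (k:ℝ) + 1 := by linarith
  have hτ0 : (0:ℝ) < τ := by linarith
  have ht0 : (0:ℝ) < t := by linarith
  have hτb : (0:ℝ) < τ ^ b := Real.rpow_pos_of_pos hτ0 b
  have htb : (0:ℝ) < t ^ b := Real.rpow_pos_of_pos ht0 b
  have htinb : (0:ℝ) < tin ^ b := Real.rpow_pos_of_pos htin b
  rw [Real.div_rpow htin.le ht0.le, Real.div_rpow htin.le hτ0.le, Real.rpow_neg ht0.le]
  -- τ^b ≤ (k/(k+1))^b * t^b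
  have h1 : τ ^ b ≤ ((k:ℝ) / ((k:ℝ) + 1)) ^ b * t ^ b := by
    rw [← Real.mul_rpow (by positivity) ht0.le]
    refine Real.rpow_le_rpow hτ0.le ?_ hb0.le
    calc τ ≤ (k:ℝ) * t / ((k:ℝ) + 1) := hhi
    _ = (k:ℝ) / ((k:ℝ) + 1) * t := by ring
  -- invert
  have h2 : (((k:ℝ) + 1) / (k:ℝ)) ^ b * (t ^ b)⁻¹ ≤ (τ ^ b)⁻¹ := by
    have hX : ((((k:ℝ) / ((k:ℝ) + 1)) ^ b * t ^ b))⁻¹ ≤ (τ ^ b)⁻¹ :=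
      inv_anti₀ hτb h1
    have hq : ((((k:ℝ) / ((k:ℝ) + 1)) ^ b))⁻¹ = (((k:ℝ) + 1) / (k:ℝ)) ^ b := by
      rw [← Real.inv_rpow (by positivity), inv_div]
    calc (((k:ℝ) + 1) / (k:ℝ)) ^ b * (t ^ b)⁻¹
        = ((((k:ℝ) / ((k:ℝ) + 1)) ^ b * t ^ b))⁻¹ := by rw [mul_inv, hq]
    _ ≤ (τ ^ b)⁻¹ := hX
  -- chord bound
  have hchord : 1 + ((2:ℝ) ^ b - 1) / ((k:ℝ) + 1) ≤ (((k:ℝ) + 1) / (k:ℝ)) ^ b := by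
    have h := aux_chord hb0.le hb1.le (by positivity : (0:ℝ) ≤ 1 / (k:ℝ))
      (by rw [div_le_one hk0]; exact hkR)
    have he : (1 : ℝ) + 1 / (k:ℝ) = ((k:ℝ) + 1) / (k:ℝ) := by field_simp
    rw [he] at h
    have hkk : ((2:ℝ) ^ b - 1) / ((k:ℝ) + 1) ≤ ((2:ℝ) ^ b - 1) * (1 / (k:ℝ)) := by
      rw [div_le_iff₀ hk10]
      have h5 : (1:ℝ) ≤ 1 / (k:ℝ) * ((k:ℝ) + 1) := by
        rw [div_mul_eq_mul_div, le_div_iff₀ hk0]; linarith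
      nlinarith [h5, h2b.le]
    linarith
  -- combine: (τ^b)⁻¹ - (t^b)⁻¹ ≥ (2^b-1)/(k+1) * (t^b)⁻¹
  have hA : ((2:ℝ) ^ b - 1) / ((k:ℝ) + 1) * (t ^ b)⁻¹ ≤ (τ ^ b)⁻¹ - (t ^ b)⁻¹ := by
    have := mul_le_mul_of_nonneg_right hchord (by positivity : (0:ℝ) ≤ (t ^ b)⁻¹)
    nlinarith
  have hB := mul_le_mul_of_nonneg_left hA (by positivity : (0:ℝ) ≤ μinf * tin ^ b)
  have hgoal : μinf * (2 ^ b - 1) * tin ^ b * (t ^ b)⁻¹ / ((k:ℝ) + 1)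
      ≤ μinf * tin ^ b * ((τ ^ b)⁻¹ - (t ^ b)⁻¹) := by
    calc μinf * (2 ^ b - 1) * tin ^ b * (t ^ b)⁻¹ / ((k:ℝ) + 1)
        = μinf * tin ^ b * ((2 ^ b - 1) / ((k:ℝ) + 1) * (t ^ b)⁻¹) := by ring
    _ ≤ _ := hB
  rw [div_eq_mul_inv (tin ^ b) (t ^ b), div_eq_mul_inv (tin ^ b) (τ ^ b)]
  linarith [hgoal]
end

section
/- Let ε, K, δ' > 0 with K ε ξ ≥ 1, let N(η) = ⌊(K ε |η|)^{1/3}⌋, and suppose η, ξ > 0 satisfy |η − ξ| ≤ (1/1000)(K ε)^{2/3}(η^{2/3} + ξ^{2/3}) and N(η) = N(ξ). Then | (ξ/η)^{2N(η)} − 1 | ≤ C (K ε)^{1/3} |η − ξ| / ⟨η⟩^{2/3} · e^{c (K ε)^{1/3} ⟨η − ξ⟩^{1/3}} for universal constants C, c > 0. -/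
open Real

private lemma abs_exp_sub_one_le' (x : ℝ) : |Real.exp x - 1| ≤ |x| * Real.exp |x| := by
  rcases le_or_gt 0 x with hx | hx
  · rw [abs_of_nonneg hx, abs_of_nonneg (by nlinarith [Real.add_one_le_exp x] : 0 ≤ Real.exp x - 1)]
    have h1 : (-x) + 1 ≤ Real.exp (-x) := by have := Real.add_one_le_exp (-x); linarith
    have h2 : Real.exp (-x) * Real.exp x = 1 := by rw [← Real.exp_add]; simp
    nlinarith [Real.exp_pos x]
  · rw [abs_of_neg hx, abs_of_nonpos
      (by nlinarith [Real.exp_lt_one_iff.mpr hx] : Real.exp x - 1 ≤ 0)]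
    have h1 : x + 1 ≤ Real.exp x := Real.add_one_le_exp x
    have h2 : 1 ≤ Real.exp (-x) := Real.one_le_exp (by linarith)
    nlinarith

set_option maxHeartbeats 1000000 in
/-- Commutator-type estimate on ratios of echo growth factors: if `N(η) = N(ξ)` where
`N(η) = ⌊(Kε|η|)^{1/3}⌋`, `Kεξ ≥ 1`, and `|η - ξ| ≤ (1/1000)(Kε)^{2/3}(η^{2/3}+ξ^{2/3})`,
then `|(ξ/η)^{2N(η)} - 1| ≤ C (Kε)^{1/3}|η-ξ|/⟨η⟩^{2/3} e^{c(Kε)^{1/3}⟨η-ξ⟩^{1/3}}`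
for universal `C, c > 0`. -/
theorem growth_ratio_commutator :
    ∃ C c : ℝ, 0 < C ∧ 0 < c ∧
      ∀ ε K δ' η ξ : ℝ, 0 < ε → 0 < K → 0 < δ' → 0 < η → 0 < ξ →
        1 ≤ K * ε * ξ →
        |η - ξ| ≤ (1 / 1000) * (K * ε) ^ ((2:ℝ)/3) * (η ^ ((2:ℝ)/3) + ξ ^ ((2:ℝ)/3)) →
        Nat.floor ((K * ε * |η|) ^ ((1:ℝ)/3)) = Nat.floor ((K * ε * |ξ|) ^ ((1:ℝ)/3)) →
        |(ξ / η) ^ (2 * Nat.floor ((K * ε * |η|) ^ ((1:ℝ)/3))) - 1|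
          ≤ C * (K * ε) ^ ((1:ℝ)/3) * |η - ξ| / (1 + η ^ 2) ^ ((1:ℝ)/3) *
              Real.exp (c * (K * ε) ^ ((1:ℝ)/3) * (1 + (η - ξ) ^ 2) ^ ((1:ℝ)/6)) := by
  refine ⟨64 * Real.exp 112, 2, by positivity, by norm_num, ?_⟩
  intro ε K δ' η ξ hε hK hδ' hη hξ hKεξ _hclose hfloor
  clear _hclose hδ'
  rw [abs_of_pos hη] at hfloor ⊢
  rw [abs_of_pos hξ] at hfloor
  have hKε : 0 < K * ε := mul_pos hK hε
  set A : ℝ := (K * ε) ^ ((1:ℝ)/3) with hAdef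
  set u : ℝ := η ^ ((1:ℝ)/3) with hudef
  set v : ℝ := ξ ^ ((1:ℝ)/3) with hvdef
  set a : ℝ := (K * ε * η) ^ ((1:ℝ)/3) with hadef
  set b : ℝ := (K * ε * ξ) ^ ((1:ℝ)/3) with hbdef
  set P : ℝ := (1 + η^2) ^ ((1:ℝ)/3) with hPdef
  set m : ℝ := (1 + (η - ξ)^2) ^ ((1:ℝ)/6) with hmdef
  have hA : 0 < A := Real.rpow_pos_of_pos hKε _
  have hu : 0 < u := Real.rpow_pos_of_pos hη _
  have hv : 0 < v := Real.rpow_pos_of_pos hξ _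
  have hP0 : 0 < P := Real.rpow_pos_of_pos (by positivity) _
  have hu3 : u ^ (3:ℕ) = η := by
    rw [hudef, ← Real.rpow_natCast (η ^ ((1:ℝ)/3)) 3, ← Real.rpow_mul hη.le]; norm_num
  have hv3 : v ^ (3:ℕ) = ξ := by
    rw [hvdef, ← Real.rpow_natCast (ξ ^ ((1:ℝ)/3)) 3, ← Real.rpow_mul hξ.le]; norm_num
  have hP3 : P ^ (3:ℕ) = 1 + η^2 := by
    rw [hPdef, ← Real.rpow_natCast ((1 + η^2) ^ ((1:ℝ)/3)) 3,
      ← Real.rpow_mul (by positivity : (0:ℝ) ≤ 1 + η^2)]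
    norm_num
  have hauA : a = A * u := by
    rw [hadef, Real.mul_rpow hKε.le hη.le, hAdef, hudef]
  have hbvA : b = A * v := by
    rw [hbdef, Real.mul_rpow hKε.le hξ.le, hAdef, hvdef]
  have hb1 : 1 ≤ b := by
    rw [hbdef]
    calc (1:ℝ) = 1 ^ ((1:ℝ)/3) := (Real.one_rpow _).symm
    _ ≤ (K * ε * ξ) ^ ((1:ℝ)/3) := Real.rpow_le_rpow zero_le_one hKεξ (by norm_num)
  have hm1 : (1:ℝ) ≤ m := by
    rw [hmdef]
    calc (1:ℝ) = 1 ^ ((1:ℝ)/6) := (Real.one_rpow _).symm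
    _ ≤ _ := Real.rpow_le_rpow zero_le_one (by nlinarith only [sq_nonneg (η - ξ)]) (by norm_num)
  clear_value A u v a b P m
  have ha0 : 0 ≤ a := by rw [hauA]; exact (mul_pos hA hu).le
  have hb0 : 0 ≤ b := by linarith only [hb1]
  set n : ℕ := Nat.floor a with hndef
  have hnb : Nat.floor b = n := hfloor.symm
  have hna : (n:ℝ) ≤ a := Nat.floor_le ha0
  have hna' : a < n + 1 := Nat.lt_floor_add_one a
  have hnbb : (n:ℝ) ≤ b := by rw [← hnb]; exact Nat.floor_le hb0
  have hnb' : b < n + 1 := by rw [← hnb]; exact Nat.lt_floor_add_one b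
  have hn1 : (1:ℝ) ≤ (n:ℝ) := by
    have h : (1:ℕ) ≤ n := by rw [← hnb]; exact Nat.le_floor (by exact_mod_cast hb1)
    exact_mod_cast h
  have ha1 : 1 ≤ a := le_trans hn1 hna
  have hab : |a - b| < 1 := by
    rw [abs_sub_lt_iff]
    constructor <;> linarith only [hna, hna', hnbb, hnb', hn1]
  have hv2u : v < 2 * u := by
    have h : A * v < A * (2 * u) := by
      have e1 : A * v = b := hbvA.symm
      have e2 : A * (2 * u) = 2 * a := by rw [hauA]; ring
      rw [e1, e2]; linarith only [hnb', hna, hn1]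
    exact lt_of_mul_lt_mul_left h hA.le
  have hu2v : u < 2 * v := by
    have h : A * u < A * (2 * v) := by
      have e1 : A * u = a := hauA.symm
      have e2 : A * (2 * v) = 2 * b := by rw [hbvA]; ring
      rw [e1, e2]; linarith only [hna', hnbb, hn1]
    exact lt_of_mul_lt_mul_left h hA.le
  have hηξ : η ≤ 8 * ξ := by
    have h := mul_pos (sub_pos.mpr hu2v)
      (show (0:ℝ) < 4*v^2 + 2*u*v + u^2 by
        nlinarith only [sq_nonneg (u+v), mul_pos hv hv])
    nlinarith only [h, hu3, hv3]
  set d : ℝ := |η - ξ| with hddef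
  have hd0 : 0 ≤ d := abs_nonneg _
  have hd_eq : d = |u - v| * (u^2 + u*v + v^2) := by
    have h1 : η - ξ = (u - v) * (u^2 + u*v + v^2) := by rw [← hu3, ← hv3]; ring
    rw [hddef, h1, abs_mul, abs_of_nonneg
      (by nlinarith only [mul_pos hu hv, sq_nonneg u, sq_nonneg v] :
        (0:ℝ) ≤ u^2 + u*v + v^2)]
  have habuv : A * |u - v| < 1 := by
    have h1 : A * |u - v| = |a - b| := by
      rw [hauA, hbvA, ← mul_sub, abs_mul, abs_of_pos hA]
    rw [h1]; exact hab
  have hAd : A * d ≤ 7 * u^2 := by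
    have huv0 : (0:ℝ) ≤ u^2 + u*v + v^2 := by
      nlinarith only [mul_pos hu hv, sq_nonneg u, sq_nonneg v]
    have h4 : (A * |u - v|) * (u^2 + u*v + v^2) ≤ 1 * (u^2 + u*v + v^2) :=
      mul_le_mul_of_nonneg_right habuv.le huv0
    have h2 : u^2 + u*v + v^2 ≤ 7 * u^2 := by
      nlinarith only [hv2u, hu, hv, mul_pos hu hv, mul_pos hv hv,
        mul_le_mul_of_nonneg_left hv2u.le hv.le, mul_le_mul_of_nonneg_left hv2u.le hu.le]
    have h3 : A * d = (A * |u - v|) * (u^2 + u*v + v^2) := by rw [hd_eq]; ring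
    rw [h3]; linarith only [h4, h2]
  -- bound on the logarithm
  set L : ℝ := Real.log (ξ / η) with hLdef
  have hL : |L| ≤ 8 * d / η := by
    have hsub1 : ξ - η ≤ d := by
      rw [hddef]; cases abs_cases (η - ξ) <;> linarith only [‹_›, abs_nonneg (η - ξ)]
    have hsub2 : η - ξ ≤ d := le_abs_self _
    have h1 : L ≤ d / η := by
      have hlog := Real.log_le_sub_one_of_pos (div_pos hξ hη)
      have h2 : ξ / η - 1 ≤ d / η := by
        rw [div_sub' hη.ne', div_le_div_iff₀ hη hη]
        nlinarith only [mul_le_mul_of_nonneg_right hsub1 hη.le]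
      exact le_trans hlog h2
    have h2 : -L ≤ 8 * d / η := by
      have hlog : Real.log (η / ξ) = -L := by
        rw [hLdef, ← Real.log_inv]; congr 1; field_simp
      have h3 := Real.log_le_sub_one_of_pos (div_pos hη hξ)
      have h4 : η / ξ - 1 ≤ d / ξ := by
        rw [div_sub' hξ.ne', div_le_div_iff₀ hξ hξ]
        nlinarith only [mul_le_mul_of_nonneg_right hsub2 hξ.le]
      have h5 : d / ξ ≤ 8 * d / η := by
        rw [div_le_div_iff₀ hξ hη]
        nlinarith only [mul_le_mul_of_nonneg_left hηξ hd0]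
      linarith only [hlog ▸ h3, h4, h5]
    have h6 : d / η ≤ 8 * d / η := by
      rw [div_le_div_iff₀ hη hη]
      nlinarith only [mul_nonneg hd0 hη.le, mul_pos hη hη]
    rw [abs_le]
    exact ⟨by linarith only [h2, h6, h1], by linarith only [h1, h6]⟩
  set X : ℝ := ((2 * n : ℕ) : ℝ) * L with hXdef
  have hX1 : |X| ≤ 2 * a * (8 * d / η) := by
    have hc : |X| = (2 * (n:ℝ)) * |L| := by
      rw [hXdef, abs_mul, abs_of_nonneg (Nat.cast_nonneg (2 * n) : (0:ℝ) ≤ ((2 * n : ℕ) : ℝ))]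
      push_cast; ring
    rw [hc]
    exact mul_le_mul (by linarith only [hna]) hL (abs_nonneg _) (by linarith only [hna, hn1])
  have hu' : u ≠ 0 := hu.ne'
  have hX2 : 2 * a * (8 * d / η) = 16 * A * d / u^2 := by
    rw [hauA, ← hu3]; field_simp; ring
  have hXu : |X| ≤ 16 * A * d / u^2 := by rw [← hX2]; exact hX1
  have hX112 : |X| ≤ 112 := by
    have h : 16 * A * d / u^2 ≤ 112 := by
      rw [div_le_iff₀ (pow_pos hu 2)]; linarith only [hAd]
    linarith only [h, hXu]
  have heq : (ξ / η) ^ (2 * n) = Real.exp X := by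
    have hpos : 0 < (ξ / η) ^ (2 * n) := pow_pos (div_pos hξ hη) _
    rw [← Real.exp_log hpos, Real.log_pow]
  have haη : 1 ≤ A^3 * η := by
    have he : A^3 * η = a^3 := by rw [hauA, ← hu3]; ring
    rw [he]
    nlinarith only [ha1, sq_nonneg (a - 1), sq_nonneg a, sq_nonneg (a + 1)]
  have hP : P ≤ 2 * (1 + A^2) * u^2 := by
    apply le_of_pow_le_pow_left₀ (n := 3) (by norm_num) (by positivity)
    rw [hP3]
    have he : (2 * (1 + A^2) * u^2) ^ (3:ℕ) = 8 * (1 + A^2)^3 * (u^(3:ℕ))^2 := by ring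
    rw [he, hu3]
    nlinarith only [haη, hη, hA.le, sq_nonneg (A^3*η - 1), sq_nonneg (A*η), sq_nonneg (A^2*η),
      mul_pos hη hη, sq_nonneg A]
  set E : ℝ := Real.exp (2 * A * m) with hEdef
  have hE0 : 0 < E := Real.exp_pos _
  have hE : 1 + A^2 ≤ 2 * E := by
    have hEm : Real.exp (2 * A) ≤ E := by
      rw [hEdef]
      exact Real.exp_le_exp.mpr (by
        nlinarith only [mul_le_mul_of_nonneg_left hm1 (mul_pos two_pos hA).le])
    have h1 : A + 1 ≤ Real.exp A := Real.add_one_le_exp A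
    have h2 : Real.exp (2 * A) = Real.exp A * Real.exp A := by
      rw [← Real.exp_add]; ring_nf
    nlinarith only [hEm, h2, hE0, hA.le,
      mul_le_mul h1 h1 (by linarith only [hA.le] : (0:ℝ) ≤ A + 1) (Real.exp_pos A).le]
  calc |(ξ / η) ^ (2 * n) - 1| = |Real.exp X - 1| := by rw [heq]
    _ ≤ |X| * Real.exp |X| := abs_exp_sub_one_le' X
    _ ≤ (16 * A * d / u^2) * Real.exp 112 :=
        mul_le_mul hXu (Real.exp_le_exp.mpr hX112) (Real.exp_pos _).le
          (by positivity)
    _ ≤ 64 * Real.exp 112 * A * d / P * E := by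
        rw [div_mul_eq_mul_div, div_mul_eq_mul_div, div_le_div_iff₀ (pow_pos hu 2) hP0]
        have hPE : P ≤ 4 * E * u^2 := by
          nlinarith only [mul_le_mul_of_nonneg_right hE (sq_nonneg u), hP]
        nlinarith only [mul_le_mul_of_nonneg_left hPE
          (mul_nonneg (mul_nonneg (by linarith only [hA.le] : (0:ℝ) ≤ 16 * A) hd0)
            (Real.exp_pos 112).le : (0:ℝ) ≤ 16 * A * d * Real.exp 112)]
end

section
/- Let 0 < ξ ≤ η, K, ε > 0 with 2(K ε ξ)^{1/3} ≥ 1 and suppose |η − ξ| ≤ ξ / 2. Let n = n(η,ξ) be a positive integer with n ≤ 2 (K ε ξ)^{1/3}. Then 1 ≤ (η/ξ)^{2n} ≤ e^{c (K ε (η − ξ))^{1/3}} for a universal constant c > 0 independent of K, ε, ξ, η, n. -/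
open Real

/-- Comparison of echo weights at nearby frequencies: if `0 < ξ ≤ η`, `|η - ξ| ≤ ξ/2`,
`2(Kεξ)^{1/3} ≥ 1`, and `1 ≤ n ≤ 2(Kεξ)^{1/3}`, then
`1 ≤ (η/ξ)^{2n} ≤ e^{c(Kε(η-ξ))^{1/3}}` for a universal constant `c > 0`. -/
theorem weight_ratio_gevrey :
    ∃ c : ℝ, 0 < c ∧
      ∀ (K ε ξ η : ℝ) (n : ℕ), 0 < K → 0 < ε → 0 < ξ → ξ ≤ η →
        1 ≤ 2 * (K * ε * ξ) ^ ((1:ℝ)/3) → |η - ξ| ≤ ξ / 2 →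
        1 ≤ n → (n : ℝ) ≤ 2 * (K * ε * ξ) ^ ((1:ℝ)/3) →
        1 ≤ (η / ξ) ^ (2 * n) ∧
        (η / ξ) ^ (2 * n) ≤ Real.exp (c * (K * ε * (η - ξ)) ^ ((1:ℝ)/3)) := by
  refine ⟨4, by norm_num, fun K ε ξ η n hK hε hξ hξη h2 habs hn1 hn2 => ?_⟩
  have hd : 0 ≤ η - ξ := by linarith
  have hd2 : η - ξ ≤ ξ / 2 := by rwa [abs_of_nonneg hd] at habs
  have hratio : 1 ≤ η / ξ := (one_le_div hξ).mpr hξη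
  refine ⟨one_le_pow₀ hratio, ?_⟩
  set A := (K * ε * ξ) ^ ((1:ℝ)/3) with hA
  set B := (K * ε * (η - ξ)) ^ ((1:ℝ)/3) with hB
  have hA0 : 0 ≤ A := Real.rpow_nonneg (by positivity) _
  have hB0 : 0 ≤ B := Real.rpow_nonneg (by positivity) _
  have hA3 : A ^ (3:ℕ) = K * ε * ξ := by
    rw [hA, ← Real.rpow_natCast (_ ^ _) 3, ← Real.rpow_mul (by positivity)]
    norm_num
  have hB3 : B ^ (3:ℕ) = K * ε * (η - ξ) := by
    rw [hB, ← Real.rpow_natCast (_ ^ _) 3, ← Real.rpow_mul (by positivity)]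
    norm_num
  have key : A * ((η - ξ) / ξ) ≤ B := by
    rw [← pow_le_pow_iff_left₀ (by positivity) hB0 (three_ne_zero), mul_pow, hA3, hB3,
      div_pow, mul_div_assoc', div_le_iff₀ (by positivity)]
    have hsq : (η - ξ) ^ 2 ≤ ξ ^ 2 := by nlinarith
    have h4 : (η - ξ) ^ 3 ≤ (η - ξ) * ξ ^ 2 := by nlinarith [mul_nonneg hd (sub_nonneg.mpr hsq)]
    nlinarith [mul_le_mul_of_nonneg_left h4 (show (0:ℝ) ≤ K * ε * ξ by positivity)]
  have h1 : η / ξ ≤ Real.exp ((η - ξ) / ξ) := by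
    have h2' := Real.add_one_le_exp ((η - ξ) / ξ)
    have h3' : (η - ξ) / ξ + 1 = η / ξ := by field_simp; ring
    linarith
  calc (η / ξ) ^ (2 * n) ≤ (Real.exp ((η - ξ) / ξ)) ^ (2 * n) :=
        pow_le_pow_left₀ (by positivity) h1 _
    _ = Real.exp ((2 * n : ℕ) * ((η - ξ) / ξ)) := by rw [← Real.exp_nat_mul]
    _ ≤ Real.exp (4 * B) := by
        apply Real.exp_le_exp.mpr
        have hnA : ((2 * n : ℕ) : ℝ) ≤ 2 * (2 * A) := by
          push_cast; nlinarith
        have ht : 0 ≤ (η - ξ) / ξ := by positivity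
        calc ((2 * n : ℕ) : ℝ) * ((η - ξ) / ξ) ≤ 4 * A * ((η - ξ) / ξ) := by
              apply mul_le_mul_of_nonneg_right _ ht
              linarith
          _ = 4 * (A * ((η - ξ) / ξ)) := by ring
          _ ≤ 4 * B := by linarith
end
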